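/- Let σ = τ₁τ₂⋯τ_k ∈ S_n be a product of k pairwise disjoint transpositions (i.e. cycles of length d = 2) with Fix(σ) = ∅, and let π, π' ∈ Cent₀(σ) be such that the image of π under the induced homomorphism Cent₀(σ) → Cent₀(σ)/K ≅ S_k is a single m-cycle. If π and π' are conjugate in S_n and their images under Cent₀(σ)/K have the same cycle type in S_k, then π and π' are conjugate in Cent₀(σ). -/

import Mathlib

open Equiv Equiv.Perm Finset

/-- The "non-trivial centralizer" `Cent₀(σ)`: permutations commuting with `σ`
whose support is contained in the support of `σ`. -/
def Cent0 {n : ℕ} (σ : Equiv.Perm (Fin n)) : Subgroup (Equiv.Perm (Fin n)) where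
  carrier := {π | Commute π σ ∧ π.support ⊆ σ.support}
  one_mem' := ⟨Commute.one_left σ, by simp⟩
  mul_mem' := by
    intro a b ha hb
    exact ⟨ha.1.mul_left hb.1, (Equiv.Perm.support_mul_le a b).trans (sup_le ha.2 hb.2)⟩
  inv_mem' := by
    intro a ha
    exact ⟨ha.1.inv_left, by rw [Equiv.Perm.support_inv]; exact ha.2⟩

/-- The product `∏_{i ∈ s} τᵢ^{zᵢ}` of powers of pairwise disjoint permutations. -/
def Kprod {n k : ℕ} (τ : Fin k → Equiv.Perm (Fin n))
    (hdisj : ∀ i j, i ≠ j → Equiv.Perm.Disjoint (τ i) (τ j))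
    (s : Finset (Fin k)) (z : Fin k → ℤ) : Equiv.Perm (Fin n) :=
  s.noncommProd (fun i => τ i ^ z i)
    (fun a _ b _ hab => Commute.zpow_zpow ((hdisj a b hab).commute) _ _)

/-- The subgroup `H_σ = { x ∈ S_{X_σ} : xσx⁻¹ = σ^z for some integer z }`, as a set. -/
def Hgrp {n : ℕ} (σ : Equiv.Perm (Fin n)) : Set (Equiv.Perm (Fin n)) :=
  {x | x.support ⊆ σ.support ∧ ∃ z : ℤ, x * σ * x⁻¹ = σ ^ z}

namespace Stmt6Aux

lemma zmod2_cases (a : ZMod 2) : a = 0 ∨ a = 1 := by revert a; decide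
lemma zmod2_add_self (a : ZMod 2) : a + a = 0 := by revert a; decide
lemma zmod2_ne (a b : ZMod 2) (ha : a ≠ 0) (hb : b ≠ 0) : a = b := by revert a b; decide

/-- The permutation `(i,c) ↦ (g i, c + δ i)` of `Fin k × ZMod 2`. -/
def F (g : Perm (Fin k)) (δ : Fin k → ZMod 2) : Perm (Fin k × ZMod 2) where
  toFun p := (g p.1, p.2 + δ p.1)
  invFun p := (g⁻¹ p.1, p.2 + δ (g⁻¹ p.1))
  left_inv p := by simp [zmod2_add_self, add_assoc]
  right_inv p := by simp [zmod2_add_self, add_assoc]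

lemma F_apply (g : Perm (Fin k)) (δ : Fin k → ZMod 2) (i : Fin k) (c : ZMod 2) :
    F g δ (i, c) = (g i, c + δ i) := rfl

lemma F_mul (g h : Perm (Fin k)) (δ η : Fin k → ZMod 2) :
    F g δ * F h η = F (g * h) (fun i => η i + δ (h i)) := by
  apply Equiv.ext; rintro ⟨i, c⟩
  simp [F, Perm.mul_apply, add_assoc]

lemma F_one : F (1 : Perm (Fin k)) (fun _ => 0) = 1 := by
  apply Equiv.ext; rintro ⟨i, c⟩; simp [F]

lemma F_pow (g : Perm (Fin k)) (δ : Fin k → ZMod 2) (m : ℕ) :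
    (F g δ) ^ m = F (g ^ m) (fun i => ∑ j ∈ Finset.range m, δ ((g ^ j) i)) := by
  induction m with
  | zero => simpa using F_one.symm
  | succ m ih =>
      rw [pow_succ' (F g δ), ih, F_mul, ← pow_succ']
      congr 1
      funext i
      rw [Finset.sum_range_succ]

lemma F_card_support (g : Perm (Fin k)) (δ : Fin k → ZMod 2) :
    (F g δ).support.card = 2 * (univ.filter fun i => g i ≠ i ∨ δ i ≠ 0).card := by
  have h : (F g δ).support = (univ.filter fun i => g i ≠ i ∨ δ i ≠ 0) ×ˢ (univ : Finset (ZMod 2)) := by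
    ext ⟨i, c⟩
    simp only [mem_support, F_apply, Finset.mem_product, Finset.mem_filter, Finset.mem_univ,
      true_and, and_true, Ne, Prod.mk.injEq, not_and]
    constructor
    · intro h
      by_cases h1 : g i = i
      · right; intro h2; exact h (h1) (by simpa using h2)
      · left; exact h1
    · rintro (h1 | h2) h3
      · exact fun _ => h1 h3
      · intro h4; exact h2 (by simpa using h4)
  rw [h, Finset.card_product]
  simp [mul_comm]

-- cycle picture
lemma pow_apply_mem_support' (g : Perm (Fin k)) (l : ℕ) {i : Fin k} (hi : i ∈ g.support) :
    (g ^ l) i ∈ g.support := by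
  simp only [mem_support] at hi ⊢
  intro h
  apply hi
  have := congrArg (fun y => ((g ^ l)⁻¹ : Perm (Fin k)) y) h
  rw [← Perm.mul_apply, ← Perm.mul_apply, mul_assoc] at this
  simpa [(Commute.pow_right (Commute.refl g) l).eq, Perm.mul_apply] using this

lemma cycle_inj {g : Perm (Fin k)} (hg : g.IsCycle) {i₀ : Fin k} (hi₀ : i₀ ∈ g.support)
    {a b : ℕ} (ha : a < g.support.card) (hb : b < g.support.card)
    (hab : (g ^ a) i₀ = (g ^ b) i₀) : a = b := by
  rcases Nat.lt_trichotomy a b with h | h | h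
  · exfalso
    have h1 : (g ^ (b - a)) ((g ^ a) i₀) = (g ^ a) i₀ := by
      rw [← Perm.mul_apply, ← pow_add, Nat.sub_add_cancel h.le, hab]
    have h2 : (g ^ a) i₀ ∈ (g ^ (b - a)).support := by
      rw [hg.support_pow_of_pos_of_lt_orderOf (by omega) (by rw [hg.orderOf]; omega)]
      exact pow_apply_mem_support' g a hi₀
    exact (mem_support.mp h2) h1
  · exact h
  · exfalso
    have h1 : (g ^ (a - b)) ((g ^ b) i₀) = (g ^ b) i₀ := by
      rw [← Perm.mul_apply, ← pow_add, Nat.sub_add_cancel h.le, ← hab]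
    have h2 : (g ^ b) i₀ ∈ (g ^ (a - b)).support := by
      rw [hg.support_pow_of_pos_of_lt_orderOf (by omega) (by rw [hg.orderOf]; omega)]
      exact pow_apply_mem_support' g b hi₀
    exact (mem_support.mp h2) h1

lemma cycle_image {g : Perm (Fin k)} (hg : g.IsCycle) {i₀ : Fin k} (hi₀ : i₀ ∈ g.support) :
    (Finset.range g.support.card).image (fun l => (g ^ l) i₀) = g.support := by
  apply Finset.eq_of_subset_of_card_le
  · intro y hy
    simp only [Finset.mem_image, Finset.mem_range] at hy
    obtain ⟨l, _, rfl⟩ := hy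
    exact pow_apply_mem_support' g l hi₀
  · rw [Finset.card_image_of_injOn]
    · simp
    · intro a ha b hb hab
      simp only [Finset.coe_range, Set.mem_Iio] at ha hb
      exact cycle_inj hg hi₀ ha hb hab

lemma cycle_sum {M : Type*} [AddCommMonoid M] {g : Perm (Fin k)} (hg : g.IsCycle)
    {i₀ : Fin k} (hi₀ : i₀ ∈ g.support) (w : Fin k → M) :
    ∑ l ∈ Finset.range g.support.card, w ((g ^ l) i₀) = ∑ i ∈ g.support, w i := by
  conv_rhs => rw [← cycle_image hg hi₀]
  exact (Finset.sum_image (fun a ha b hb hab =>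
      cycle_inj hg hi₀ (Finset.mem_range.mp ha) (Finset.mem_range.mp hb) hab)).symm

lemma count1 (g : Perm (Fin k)) (δ : Fin k → ZMod 2) :
    (univ.filter fun i => g i ≠ i ∨ δ i ≠ 0).card
      = g.support.card + (univ.filter fun i => g i = i ∧ δ i ≠ 0).card := by
  have h : (univ.filter fun i => g i ≠ i ∨ δ i ≠ 0)
      = g.support ∪ (univ.filter fun i => g i = i ∧ δ i ≠ 0) := by
    ext i
    simp only [Finset.mem_filter, Finset.mem_univ, true_and, Finset.mem_union, mem_support]
    tauto
  rw [h, Finset.card_union_of_disjoint]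
  rw [Finset.disjoint_left]
  intro a ha hb
  simp only [mem_support] at ha
  simp only [Finset.mem_filter, Finset.mem_univ, true_and] at hb
  exact ha hb.1

lemma count2 {g : Perm (Fin k)} {m : ℕ} (hg : g.IsCycle) (hm : g.support.card = m)
    (δ : Fin k → ZMod 2) :
    (univ.filter fun i => (g ^ m) i ≠ i ∨ (∑ j ∈ Finset.range m, δ ((g ^ j) i)) ≠ 0).card
      = (if (∑ i ∈ g.support, δ i) = 0 then 0 else m)
        + (if (m : ZMod 2) = 0 then 0 else (univ.filter fun i => g i = i ∧ δ i ≠ 0).card) := by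
  have hgm : g ^ m = 1 := by rw [← hm, ← hg.orderOf]; exact pow_orderOf_eq_one g
  have h1 : (univ.filter fun i => (g ^ m) i ≠ i ∨ (∑ j ∈ Finset.range m, δ ((g ^ j) i)) ≠ 0)
      = (g.support.filter fun i => (∑ j ∈ Finset.range m, δ ((g ^ j) i)) ≠ 0)
        ∪ ((univ.filter fun i => g i = i ∧ (∑ j ∈ Finset.range m, δ ((g ^ j) i)) ≠ 0)) := by
    ext i
    simp only [hgm, Perm.one_apply, Finset.mem_filter, Finset.mem_univ, true_and,
      Finset.mem_union, mem_support]
    tauto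
  rw [h1, Finset.card_union_of_disjoint]
  swap
  · rw [Finset.disjoint_left]
    intro a ha hb
    simp only [Finset.mem_filter, mem_support, Finset.mem_univ, true_and] at ha hb
    exact ha.1 hb.1
  congr 1
  · -- on the support the partial sum is the full sum
    by_cases hS : (∑ i ∈ g.support, δ i) = 0
    · rw [if_pos hS, Finset.card_eq_zero, Finset.filter_eq_empty_iff]
      intro i hi
      rw [← hm, cycle_sum hg hi δ, hS]
      simp
    · rw [if_neg hS, ← hm]
      congr 1
      rw [Finset.filter_eq_self]
      intro i hi
      rw [cycle_sum hg hi δ]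
      exact hS
  · -- off the support
    have key : ∀ i : Fin k, g i = i → (∑ j ∈ Finset.range m, δ ((g ^ j) i)) = (m : ZMod 2) * δ i := by
      intro i hi
      have : ∀ j : ℕ, (g ^ j) i = i := fun j => Equiv.Perm.pow_apply_eq_self_of_apply_eq_self hi j
      simp only [this]
      rw [Finset.sum_const, Finset.card_range, nsmul_eq_mul]
    by_cases hmz : (m : ZMod 2) = 0
    · rw [if_pos hmz, Finset.card_eq_zero, Finset.filter_eq_empty_iff]
      intro i _
      simp only [not_not, not_and]
      intro hgi
      rw [key i hgi, hmz, zero_mul]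
    · rw [if_neg hmz]
      congr 1
      ext i
      simp only [Finset.mem_filter, Finset.mem_univ, true_and]
      constructor
      · rintro ⟨hgi, hs⟩
        refine ⟨hgi, fun h0 => hs ?_⟩
        rw [key i hgi, h0, mul_zero]
      · rintro ⟨hgi, hs⟩
        refine ⟨hgi, fun h0 => hs ?_⟩
        have hm1 : (m : ZMod 2) = 1 := (zmod2_cases _).resolve_left hmz
        rw [key i hgi, hm1, one_mul] at h0
        exact h0


lemma counts {g g' : Perm (Fin k)} {m : ℕ} (hg : g.IsCycle) (hg' : g'.IsCycle)
    (hm : g.support.card = m) (hm' : g'.support.card = m)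
    (δ δ' : Fin k → ZMod 2)
    (h1 : (univ.filter fun i => g i ≠ i ∨ δ i ≠ 0).card
        = (univ.filter fun i => g' i ≠ i ∨ δ' i ≠ 0).card)
    (h2 : (univ.filter fun i => (g ^ m) i ≠ i ∨ (∑ j ∈ Finset.range m, δ ((g ^ j) i)) ≠ 0).card
        = (univ.filter fun i => (g' ^ m) i ≠ i ∨ (∑ j ∈ Finset.range m, δ' ((g' ^ j) i)) ≠ 0).card) :
    (univ.filter fun i => g i = i ∧ δ i ≠ 0).card
        = (univ.filter fun i => g' i = i ∧ δ' i ≠ 0).card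
      ∧ ∑ i ∈ g.support, δ i = ∑ i ∈ g'.support, δ' i := by
  have hmpos : 0 < m := by
    rw [← hm, ← hg.orderOf]
    exact orderOf_pos g
  rw [count1, count1, hm, hm'] at h1
  have ht : (univ.filter fun i => g i = i ∧ δ i ≠ 0).card
      = (univ.filter fun i => g' i = i ∧ δ' i ≠ 0).card := by omega
  refine ⟨ht, ?_⟩
  rw [count2 hg hm δ, count2 hg' hm' δ', ht] at h2
  by_cases hS : (∑ i ∈ g.support, δ i) = 0 <;> by_cases hS' : (∑ i ∈ g'.support, δ' i) = 0
  · rw [hS, hS']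
  · rw [if_pos hS, if_neg hS'] at h2; omega
  · rw [if_neg hS, if_pos hS'] at h2; omega
  · exact zmod2_ne _ _ hS hS'

lemma exists_eps {g : Perm (Fin k)} (hg : g.IsCycle) (w : Fin k → ZMod 2)
    (hw0 : ∀ i, g i = i → w i = 0) (hwsum : ∑ i ∈ g.support, w i = 0) :
    ∃ ε : Fin k → ZMod 2, ∀ i, ε (g i) = ε i + w i := by
  classical
  set m := g.support.card with hm
  have hmpos : 0 < m := by rw [hm, ← hg.orderOf]; exact orderOf_pos g
  have hgm : g ^ m = 1 := by rw [hm, ← hg.orderOf]; exact pow_orderOf_eq_one g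
  obtain ⟨i₀, hi₀⟩ : ∃ i₀, i₀ ∈ g.support := Finset.card_pos.mp (by omega)
  have hex : ∀ i, i ∈ g.support → ∃ j : ℕ, (g ^ j) i₀ = i := by
    intro i hi
    rw [← cycle_image hg hi₀] at hi
    rcases Finset.mem_image.mp hi with ⟨j, _, hj⟩
    exact ⟨j, hj⟩
  have hexlt : ∀ i, i ∈ g.support → ∃ j : ℕ, j < m ∧ (g ^ j) i₀ = i := by
    intro i hi
    rw [← cycle_image hg hi₀] at hi
    rcases Finset.mem_image.mp hi with ⟨j, hjr, hj⟩
    exact ⟨j, Finset.mem_range.mp hjr, hj⟩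
  set J : Fin k → ℕ := fun i => if h : i ∈ g.support then Nat.find (hex i h) else 0 with hJ
  have hJspec : ∀ i (h : i ∈ g.support), (g ^ (J i)) i₀ = i := by
    intro i h
    simp only [hJ, dif_pos h]
    exact Nat.find_spec (hex i h)
  have hJlt : ∀ i (h : i ∈ g.support), J i < m := by
    intro i h
    rcases hexlt i h with ⟨j, hjm, hj⟩
    simp only [hJ, dif_pos h]
    exact lt_of_le_of_lt (Nat.find_min' (hex i h) hj) hjm
  have hJuniq : ∀ i (h : i ∈ g.support) (j : ℕ), j < m → (g ^ j) i₀ = i → J i = j := by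
    intro i h j hjm hj
    exact cycle_inj hg hi₀ (hJlt i h) hjm ((hJspec i h).trans hj.symm)
  refine ⟨fun i => ∑ l ∈ Finset.range (J i), w ((g ^ l) i₀), ?_⟩
  intro i
  dsimp only
  by_cases hi : i ∈ g.support
  · have hgi : g i ∈ g.support := Equiv.Perm.apply_mem_support.mpr hi
    have hsucc : (g ^ (J i + 1)) i₀ = g i := by
      rw [pow_succ', Perm.mul_apply, hJspec i hi]
    by_cases hcase : J i + 1 < m
    · rw [hJuniq (g i) hgi (J i + 1) hcase hsucc, Finset.sum_range_succ, hJspec i hi]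
    · have hje : J i + 1 = m := by have := hJlt i hi; omega
      have hgii : g i = i₀ := by rw [← hsucc, hje, hgm, Perm.one_apply]
      have hJ0 : J (g i) = 0 := by
        apply hJuniq (g i) hgi 0 hmpos
        rw [pow_zero, Perm.one_apply, hgii]
      rw [hJ0]
      have : ∑ l ∈ Finset.range (J i), w ((g ^ l) i₀) + w i
          = ∑ l ∈ Finset.range (J i + 1), w ((g ^ l) i₀) := by
        rw [Finset.sum_range_succ, hJspec i hi]
      rw [this, hje, hm, cycle_sum hg hi₀ w, hwsum]
      simp
  · have hgi : g i = i := by rwa [← notMem_support]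
    rw [hgi, hw0 i hgi, add_zero]

lemma exists_theta {g g' : Perm (Fin k)} {m : ℕ} (hg : g.IsCycle) (hg' : g'.IsCycle)
    (hm : g.support.card = m) (hm' : g'.support.card = m)
    (δ δ' : Fin k → ZMod 2)
    (ht : (univ.filter fun i => g i = i ∧ δ i ≠ 0).card
        = (univ.filter fun i => g' i = i ∧ δ' i ≠ 0).card) :
    ∃ θ : Perm (Fin k), θ * g = g' * θ ∧ ∀ i, g i = i → δ' (θ i) = δ i := by
  classical
  obtain ⟨θ₀, hθ₀⟩ := isConj_iff.mp (hg.isConj hg' (hm.trans hm'.symm))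
  have hsupp : g'.support = g.support.map θ₀.toEmbedding := by
    rw [← hθ₀, Equiv.Perm.support_conj]
  have hmem : ∀ i, θ₀ i ∈ g'.support ↔ i ∈ g.support := by
    intro i; rw [hsupp, Finset.mem_map_equiv]; simp
  set N : Finset (Fin k) := univ.filter (fun i => g i = i ∧ δ i ≠ 0) with hN
  set N' : Finset (Fin k) := univ.filter (fun i => g' i = i ∧ δ' i ≠ 0) with hN'
  set Nim : Finset (Fin k) := N.image θ₀ with hNim
  have hN'p : ∀ x ∈ N', x ∉ g'.support := by
    intro x hx
    rw [hN', Finset.mem_filter] at hx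
    rw [notMem_support]
    exact hx.2.1
  have hNmem : ∀ x, x ∈ N ↔ (g x = x ∧ δ x ≠ 0) := by
    intro x; rw [hN, Finset.mem_filter]; simp
  have hNimp : ∀ x ∈ Nim, x ∉ g'.support := by
    intro x hx
    rw [hNim, Finset.mem_image] at hx
    obtain ⟨a, ha, rfl⟩ := hx
    rw [hmem, mem_support]
    rw [hNmem] at ha
    simp [ha.1]
  have hcard : Fintype.card {y : {x // x ∉ g'.support} // y.1 ∈ Nim}
      = Fintype.card {y : {x // x ∉ g'.support} // y.1 ∈ N'} := by
    rw [Fintype.card_congr (Equiv.subtypeSubtypeEquivSubtype (fun {x} hx => hNimp x hx)),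
      Fintype.card_congr (Equiv.subtypeSubtypeEquivSubtype (fun {x} hx => hN'p x hx))]
    have h1 : Fintype.card {x // x ∈ Nim} = Nim.card := Fintype.card_coe Nim
    have h2 : Fintype.card {x // x ∈ N'} = N'.card := Fintype.card_coe N'
    rw [h1, h2, hNim, Finset.card_image_of_injective N θ₀.injective]
    rw [hN, hN']
    exact ht
  set e₂ := Fintype.equivOfCardEq hcard with he₂
  set η₁ : Perm {x // x ∉ g'.support} := Equiv.extendSubtype e₂ with hη₁
  set η : Perm (Fin k) := Equiv.Perm.ofSubtype η₁ with hη
  have hηfix : ∀ x ∈ g'.support, η x = x := by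
    intro x hx
    exact Equiv.Perm.ofSubtype_apply_of_not_mem η₁ (by simp [hx])
  have hηmem : ∀ x, x ∉ g'.support → η x ∉ g'.support := by
    intro x hx
    rw [hη]
    exact (Equiv.Perm.ofSubtype_apply_mem_iff_mem η₁ x).mpr hx
  have hηap : ∀ x (hx : x ∉ g'.support), η x = (η₁ ⟨x, hx⟩ : Fin k) := by
    intro x hx
    exact Equiv.Perm.ofSubtype_apply_of_mem η₁ hx
  have hηN : ∀ x (hx : x ∉ g'.support), (x ∈ Nim → η x ∈ N') ∧ (x ∉ Nim → η x ∉ N') := by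
    intro x hx
    constructor
    · intro hxN
      have h := Equiv.extendSubtype_mem e₂ ⟨x, hx⟩ hxN
      rw [hηap x hx]
      exact h
    · intro hxN
      have h := Equiv.extendSubtype_not_mem e₂ ⟨x, hx⟩ hxN
      rw [hηap x hx]
      exact h
  have heq1 : θ₀ * g = g' * θ₀ := by
    have := hθ₀
    rw [mul_inv_eq_iff_eq_mul] at this
    exact this
  have hcomm : η * g' = g' * η := by
    have hdis : Equiv.Perm.Disjoint η g' := by
      intro x
      by_cases hx : x ∈ g'.support
      · left; exact hηfix x hx
      · right; rwa [← notMem_support]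
    exact hdis.commute.eq
  refine ⟨η * θ₀, ?_, ?_⟩
  · rw [mul_assoc, heq1, ← mul_assoc, hcomm, mul_assoc]
  · intro i hgi
    have hins : i ∉ g.support := notMem_support.mpr hgi
    have hθi : θ₀ i ∉ g'.support := fun h => hins ((hmem i).mp h)
    have happ : (η * θ₀) i = η (θ₀ i) := rfl
    by_cases hδ : δ i = 0
    · have hNimi : θ₀ i ∉ Nim := by
        rw [hNim, Finset.mem_image]
        rintro ⟨a, ha, hai⟩
        have : a = i := θ₀.injective hai
        subst this
        rw [hNmem] at ha
        exact ha.2 hδ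
      have h1 : η (θ₀ i) ∉ N' := (hηN _ hθi).2 hNimi
      have h2 : η (θ₀ i) ∉ g'.support := hηmem _ hθi
      rw [happ, hδ]
      by_contra hc
      apply h1
      rw [hN', Finset.mem_filter]
      exact ⟨Finset.mem_univ _, notMem_support.mp h2, hc⟩
    · have hNimi : θ₀ i ∈ Nim := by
        rw [hNim]
        exact Finset.mem_image_of_mem θ₀ ((hNmem i).mpr ⟨hgi, hδ⟩)
      have h1 : η (θ₀ i) ∈ N' := (hηN _ hθi).1 hNimi
      rw [hN', Finset.mem_filter] at h1
      rw [happ]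
      exact zmod2_ne _ _ h1.2.2 hδ

lemma mem_foldr_sup {l : List (Perm (Fin n))} {x : Fin n} :
    x ∈ (l.map Equiv.Perm.support).foldr (· ⊔ ·) ⊥ ↔ ∃ p ∈ l, x ∈ p.support := by
  induction l with
  | nil => simp
  | cons hd tl ih =>
      rw [List.map_cons, List.foldr_cons,
        Finset.sup_eq_union (s := hd.support)
          (t := (List.map support tl).foldr (· ⊔ ·) ⊥),
        Finset.mem_union, ih]
      constructor
      · rintro (h | ⟨p, hp, hxp⟩)
        · exact ⟨hd, List.mem_cons_self (a := hd) (l := tl), h⟩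
        · exact ⟨p, List.mem_cons_of_mem hd hp, hxp⟩
      · rintro ⟨p, hp, hxp⟩
        rcases List.mem_cons.mp hp with rfl | hp
        · exact Or.inl hxp
        · exact Or.inr ⟨p, hp, hxp⟩

lemma bridge (σ : Perm (Fin n)) (τ : Fin k → Perm (Fin n))
    (hcyc : ∀ i, (τ i).IsCycle) (hlen : ∀ i, (τ i).support.card = 2)
    (hdisj : ∀ i j, i ≠ j → Equiv.Perm.Disjoint (τ i) (τ j))
    (hσ : σ = (List.ofFn τ).prod)
    (hfix : ∀ x : Fin n, σ x ≠ x) :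
    ∃ e : Fin n ≃ (Fin k × ZMod 2),
      e.permCongr σ = F 1 (fun _ => 1) ∧
      ∀ (π : Perm (Fin n)) (g : Perm (Fin k)), Commute π σ →
        (∀ i, π * τ i * π⁻¹ = τ (g i)) →
        ∃ δ : Fin k → ZMod 2, e.permCongr π = F g δ := by
  classical
  have hpair : (List.ofFn τ).Pairwise Equiv.Perm.Disjoint := by
    rw [List.pairwise_ofFn]
    exact fun i j h => hdisj i j (ne_of_lt h)
  have hmem : ∀ i, τ i ∈ List.ofFn τ := by
    intro i
    rw [List.mem_ofFn]
    exact ⟨i, rfl⟩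

  have happly : ∀ i, ∀ x ∈ (τ i).support, σ x = τ i x := by
    intro i x hx
    rw [hσ]
    exact (Equiv.Perm.eq_on_support_mem_disjoint (hmem i) hpair x hx).symm
  have hexists : ∀ x : Fin n, ∃ i, x ∈ (τ i).support := by
    intro x
    have hx : x ∈ σ.support := Equiv.Perm.mem_support.mpr (hfix x)
    rw [hσ, Equiv.Perm.support_prod_of_pairwise_disjoint _ hpair] at hx
    rcases mem_foldr_sup.mp hx with ⟨p, hp, hxp⟩
    rcases List.mem_ofFn.mp hp with ⟨i, rfl⟩
    exact ⟨i, hxp⟩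
  set B : Fin n → Fin k := fun x => (hexists x).choose with hB
  have hBmem : ∀ x, x ∈ (τ (B x)).support := fun x => (hexists x).choose_spec
  have hBuniq : ∀ x i, x ∈ (τ i).support → i = B x := by
    intro x i hxi
    by_contra hne
    rcases hdisj i (B x) hne x with h | h
    · exact (Equiv.Perm.mem_support.mp hxi) h
    · exact (Equiv.Perm.mem_support.mp (hBmem x)) h
  set pt : Fin k → Fin n := fun i => (τ i).support.min' (by
    rw [← Finset.card_pos, hlen i]; omega) with hpt
  have hptmem : ∀ i, pt i ∈ (τ i).support := fun i => Finset.min'_mem _ _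
  have hBpt : ∀ i, B (pt i) = i := fun i => (hBuniq (pt i) i (hptmem i)).symm
  have hσBB : ∀ x, σ x = τ (B x) x := fun x => happly (B x) x (hBmem x)
  have hσmem : ∀ x, σ x ∈ (τ (B x)).support := by
    intro x
    rw [hσBB x]
    exact Equiv.Perm.apply_mem_support.mpr (hBmem x)
  have hBσ : ∀ x, B (σ x) = B x := fun x => (hBuniq (σ x) (B x) (hσmem x)).symm
  have hτinv : ∀ i, τ i * τ i = 1 := by
    intro i
    obtain ⟨a, b, hab, hswap⟩ := Equiv.Perm.card_support_eq_two.mp (hlen i)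
    rw [hswap, Equiv.swap_mul_self]
  have hσσ : ∀ x, σ (σ x) = x := by
    intro x
    rw [hσBB x, hσBB (τ (B x) x)]
    have : B (τ (B x) x) = B x := by rw [← hσBB x, hBσ x]
    rw [this, ← Equiv.Perm.mul_apply, hτinv (B x), Equiv.Perm.one_apply]
  have hsupp_eq : ∀ i, (τ i).support = {pt i, σ (pt i)} := by
    intro i
    have h1 : σ (pt i) ∈ (τ i).support := by
      have := hσmem (pt i); rwa [hBpt i] at this
    have hne : pt i ≠ σ (pt i) := fun h => hfix (pt i) h.symm
    apply (Finset.eq_of_subset_of_card_le ?_ ?_).symm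
    · intro y hy
      rcases Finset.mem_insert.mp hy with rfl | hy2
      · exact hptmem i
      · rw [Finset.mem_singleton.mp hy2]; exact h1
    · rw [hlen i, Finset.card_insert_of_notMem (by simpa using hne), Finset.card_singleton]
  have hmem_cases : ∀ i x, x ∈ (τ i).support → x = pt i ∨ x = σ (pt i) := by
    intro i x hx
    rw [hsupp_eq i] at hx
    simpa using hx
  -- the equivalence
  set e : Fin n ≃ (Fin k × ZMod 2) :=
    { toFun := fun x => (B x, if x = pt (B x) then 0 else 1)
      invFun := fun p => if p.2 = 0 then pt p.1 else σ (pt p.1)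
      left_inv := by
        intro x
        dsimp only
        rcases hmem_cases (B x) x (hBmem x) with h | h
        · rw [if_pos h, if_pos rfl, ← h]
        · have hne : x ≠ pt (B x) := fun hc => hfix (pt (B x)) (h.symm.trans hc)
          rw [if_neg hne, if_neg (by decide : ¬((1 : ZMod 2) = 0)), ← h]
      right_inv := by
        rintro ⟨i, c⟩
        dsimp only
        rcases zmod2_cases c with rfl | rfl
        · rw [if_pos rfl, Prod.mk.injEq]
          refine ⟨hBpt i, ?_⟩
          rw [hBpt i, if_pos rfl]
        · rw [if_neg (by decide : ¬((1 : ZMod 2) = 0)), Prod.mk.injEq]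
          have hb : B (σ (pt i)) = i := by rw [hBσ, hBpt]
          refine ⟨hb, ?_⟩
          rw [hb, if_neg (fun hc => hfix (pt i) hc)] } with he
  have heap : ∀ x, e x = (B x, if x = pt (B x) then 0 else 1) := fun _ => rfl
  have hesymm0 : ∀ i, e.symm (i, (0 : ZMod 2)) = pt i := by
    intro i
    show (if ((0 : ZMod 2)) = 0 then pt i else σ (pt i)) = pt i
    rw [if_pos rfl]
  have hesymm1 : ∀ i, e.symm (i, (1 : ZMod 2)) = σ (pt i) := by
    intro i
    show (if ((1 : ZMod 2)) = 0 then pt i else σ (pt i)) = σ (pt i)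
    rw [if_neg (by decide : ¬((1 : ZMod 2) = 0))]
  have hFap : ∀ (g : Perm (Fin k)) (δ : Fin k → ZMod 2) (i : Fin k) (c : ZMod 2),
      F g δ (i, c) = (g i, c + δ i) := fun _ _ _ _ => rfl
  refine ⟨e, ?_, ?_⟩
  · apply Equiv.ext
    rintro ⟨i, c⟩
    rw [Equiv.permCongr_apply]
    rcases zmod2_cases c with rfl | rfl
    · rw [hesymm0, heap, hFap, Prod.mk.injEq]
      have hb : B (σ (pt i)) = i := by rw [hBσ, hBpt]
      refine ⟨by rw [hb, Equiv.Perm.one_apply], ?_⟩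
      rw [hb, if_neg (fun hc => hfix (pt i) hc)]
      decide
    · rw [hesymm1, hσσ (pt i), heap, hFap, Prod.mk.injEq]
      refine ⟨by rw [hBpt i, Equiv.Perm.one_apply], ?_⟩
      rw [hBpt i, if_pos rfl]
      decide
  · intro π g hcπ hgconj
    have hπτ : ∀ i x, x ∈ (τ i).support → π x ∈ (τ (g i)).support := by
      intro i x hx
      rw [← hgconj i, Equiv.Perm.support_conj]
      exact Finset.mem_map_of_mem _ hx
    have hπB : ∀ x, B (π x) = g (B x) := fun x =>
      (hBuniq (π x) (g (B x)) (hπτ (B x) x (hBmem x))).symm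
    have hπσ : ∀ x, π (σ x) = σ (π x) := by
      intro x
      have h1 : (π * σ) x = (σ * π) x := by rw [hcπ.eq]
      simpa [Equiv.Perm.mul_apply] using h1
    refine ⟨fun i => if π (pt i) = pt (g i) then 0 else 1, ?_⟩
    apply Equiv.ext
    rintro ⟨i, c⟩
    rw [Equiv.permCongr_apply]
    have hbp : B (π (pt i)) = g i := by rw [hπB, hBpt]
    have hπmemi : π (pt i) ∈ (τ (g i)).support := by
      have := hπτ (B (pt i)) (pt i) (hBmem (pt i))
      rwa [hBpt i] at this
    rcases zmod2_cases c with rfl | rfl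
    · rw [hesymm0, heap, hFap, Prod.mk.injEq]
      refine ⟨hbp, ?_⟩
      rw [hbp, zero_add]
    · rw [hesymm1, hπσ (pt i), heap, hFap, Prod.mk.injEq]
      have hbσπ : B (σ (π (pt i))) = g i := by rw [hBσ, hbp]
      refine ⟨hbσπ, ?_⟩
      rw [hbσπ]
      rcases hmem_cases (g i) (π (pt i)) hπmemi with hcase | hcase
      · rw [if_neg (by rw [hcase]; exact fun hc => hfix (pt (g i)) hc),
          if_pos hcase]
        decide
      · have hne : π (pt i) ≠ pt (g i) := by
          rw [hcase]; exact fun hc => hfix (pt (g i)) hc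
        rw [hcase, hσσ (pt (g i)), if_pos rfl,
          if_neg (fun hc => hfix (pt (g i)) hc)]
        decide

variable {n k : ℕ}

lemma permCongr_mul (e : Fin n ≃ (Fin k × ZMod 2)) (p q : Perm (Fin n)) :
    e.permCongr (p * q) = e.permCongr p * e.permCongr q := by
  apply Equiv.ext
  intro x
  simp [Equiv.permCongr_apply, Equiv.Perm.mul_apply]

lemma permCongr_one (e : Fin n ≃ (Fin k × ZMod 2)) :
    e.permCongr (1 : Perm (Fin n)) = 1 := by
  apply Equiv.ext
  intro x
  simp [Equiv.permCongr_apply]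

lemma permCongr_inv (e : Fin n ≃ (Fin k × ZMod 2)) (p : Perm (Fin n)) :
    e.permCongr p⁻¹ = (e.permCongr p)⁻¹ := by
  have h : e.permCongr p * e.permCongr p⁻¹ = 1 := by
    rw [← permCongr_mul, mul_inv_cancel, permCongr_one]
  exact (inv_eq_of_mul_eq_one_right h).symm

lemma permCongr_pow (e : Fin n ≃ (Fin k × ZMod 2)) (p : Perm (Fin n)) (m : ℕ) :
    e.permCongr (p ^ m) = (e.permCongr p) ^ m := by
  induction m with
  | zero => simpa using permCongr_one e
  | succ m ih => rw [pow_succ, pow_succ, permCongr_mul, ih]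

lemma card_support_permCongr (e : Fin n ≃ (Fin k × ZMod 2)) (p : Perm (Fin n)) :
    (e.permCongr p).support.card = p.support.card := by
  have h : (e.permCongr p).support = p.support.map e.toEmbedding := by
    ext y
    simp only [Equiv.Perm.mem_support, Equiv.permCongr_apply, Finset.mem_map,
      Equiv.coe_toEmbedding]
    constructor
    · intro hy
      refine ⟨e.symm y, fun hc => hy ?_, e.apply_symm_apply y⟩
      rw [hc, e.apply_symm_apply]
    · rintro ⟨z, hz, rfl⟩
      rw [e.symm_apply_apply]
      exact fun hc => hz (e.injective hc)
  rw [h, Finset.card_map]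

end Stmt6Aux

open Stmt6Aux

/-- `σ = τ₁⋯τ_k` is a product of `k` pairwise disjoint transpositions
(`d = 2`) without fixed points, `π, π' ∈ Cent₀(σ)`, and the image of `π` under the
induced map `Cent₀(σ) → S_k` is a single `m`-cycle.  If `π, π'` are conjugate in `S_n`
and their images under `Cent₀(σ)/K` have the same cycle type in `S_k`, then `π` and
`π'` are conjugate in `Cent₀(σ)`. -/
theorem conjugate_in_cent0_of_transpositions
    {n k m : ℕ} (σ : Equiv.Perm (Fin n)) (τ : Fin k → Equiv.Perm (Fin n))
    (hcyc : ∀ i, (τ i).IsCycle) (hlen : ∀ i, (τ i).support.card = 2)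
    (hdisj : ∀ i j, i ≠ j → Equiv.Perm.Disjoint (τ i) (τ j))
    (hσ : σ = (List.ofFn τ).prod)
    (hfix : ∀ x : Fin n, σ x ≠ x)
    (π π' : Equiv.Perm (Fin n)) (hπmem : π ∈ Cent0 σ) (hπ'mem : π' ∈ Cent0 σ)
    -- the images of `π` and `π'` under `Cent₀(σ) → S_k`
    (g g' : Equiv.Perm (Fin k))
    (hgconj : ∀ i, π * τ i * π⁻¹ = τ (g i))
    (hg'conj : ∀ i, π' * τ i * π'⁻¹ = τ (g' i))
    -- the image of `π` is a single `m`-cycle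
    (hgcycle : g.IsCycle) (hgcard : g.support.card = m)
    -- `π, π'` conjugate in `S_n` with images of equal cycle type
    (hconj : IsConj π π')
    (hct : g.cycleType = g'.cycleType) :
    ∃ ρ ∈ Cent0 σ, ρ * π * ρ⁻¹ = π' := by
  classical
  obtain ⟨e, hσF, hbr⟩ := bridge σ τ hcyc hlen hdisj hσ hfix
  obtain ⟨δ, hπF⟩ := hbr π g hπmem.1 hgconj
  obtain ⟨δ', hπ'F⟩ := hbr π' g' hπ'mem.1 hg'conj
  -- `g'` is also an `m`-cycle
  have hg'cycle : g'.IsCycle := by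
    rw [← Equiv.Perm.card_cycleType_eq_one, ← hct, hgcycle.cycleType]
    rfl
  have hg'card : g'.support.card = m := by
    rw [← Equiv.Perm.sum_cycleType, ← hct, hgcycle.cycleType, hgcard]
    simp
  -- conjugation invariants
  obtain ⟨x, hx⟩ := isConj_iff.mp hconj
  have hcard1 : π.support.card = π'.support.card := by
    rw [← hx, Equiv.Perm.card_support_conj]
  have hxm : x * π ^ m * x⁻¹ = π' ^ m := by
    rw [← hx]
    simpa [MulAut.conj_apply] using (map_pow (MulAut.conj x) π m).symm
  have hcardm : (π ^ m).support.card = (π' ^ m).support.card := by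
    rw [← hxm, Equiv.Perm.card_support_conj]
  -- transfer to coordinates
  have h1 : (univ.filter fun i => g i ≠ i ∨ δ i ≠ 0).card
      = (univ.filter fun i => g' i ≠ i ∨ δ' i ≠ 0).card := by
    have a1 : (F g δ).support.card = (F g' δ').support.card := by
      rw [← hπF, ← hπ'F, card_support_permCongr, card_support_permCongr]
      exact hcard1
    rw [F_card_support, F_card_support] at a1
    omega
  have h2 : (univ.filter fun i => (g ^ m) i ≠ i
        ∨ (∑ j ∈ Finset.range m, δ ((g ^ j) i)) ≠ 0).card
      = (univ.filter fun i => (g' ^ m) i ≠ i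
        ∨ (∑ j ∈ Finset.range m, δ' ((g' ^ j) i)) ≠ 0).card := by
    have a2 : ((F g δ) ^ m).support.card = ((F g' δ') ^ m).support.card := by
      rw [← hπF, ← hπ'F, ← permCongr_pow, ← permCongr_pow,
        card_support_permCongr, card_support_permCongr]
      exact hcardm
    simp only [F_pow, F_card_support] at a2
    omega
  obtain ⟨ht, hs⟩ := counts hgcycle hg'cycle hgcard hg'card δ δ' h1 h2
  obtain ⟨θ, hθg, hθδ⟩ := exists_theta hgcycle hg'cycle hgcard hg'card δ δ' ht
  set w : Fin k → ZMod 2 := fun i => δ i + δ' (θ i) with hw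
  have hw0 : ∀ i, g i = i → w i = 0 := by
    intro i hi
    rw [hw]
    dsimp only
    rw [hθδ i hi]
    exact zmod2_add_self (δ i)
  have hsupp' : g'.support = g.support.map θ.toEmbedding := by
    have hconj' : θ * g * θ⁻¹ = g' := by
      rw [hθg, mul_assoc, mul_inv_cancel, mul_one]
    rw [← hconj', Equiv.Perm.support_conj]
  have hwsum : ∑ i ∈ g.support, w i = 0 := by
    rw [hw]
    dsimp only
    rw [Finset.sum_add_distrib]
    have hre : ∑ i ∈ g.support, δ' (θ i) = ∑ j ∈ g'.support, δ' j := by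
      rw [hsupp', Finset.sum_map]
      simp
    rw [hre, hs]
    exact zmod2_add_self _
  obtain ⟨ε, hε⟩ := exists_eps hgcycle w hw0 hwsum
  set ρ : Equiv.Perm (Fin n) := e.permCongr.symm (F θ ε) with hρ
  have hρF : e.permCongr ρ = F θ ε := by
    rw [hρ]
    exact Equiv.apply_symm_apply _ _
  have hkey : F θ ε * F g δ = F g' δ' * F θ ε := by
    rw [F_mul, F_mul, hθg]
    congr 1
    funext i
    have h2' := hε i
    rw [h2']
    have hh : δ i + (ε i + w i) = (δ i + δ i) + (ε i + δ' (θ i)) := by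
      rw [hw]; ring
    rw [hh, zmod2_add_self, zero_add]
  have hcomm : Commute ρ σ := by
    show ρ * σ = σ * ρ
    apply e.permCongr.injective
    rw [Stmt6Aux.permCongr_mul, Stmt6Aux.permCongr_mul, hρF, hσF, F_mul, F_mul, mul_one, one_mul]
    congr 1
    funext i
    show (1 : ZMod 2) + ε ((1 : Equiv.Perm (Fin k)) i) = ε i + 1
    rw [Equiv.Perm.one_apply, add_comm]
  have hsub : ρ.support ⊆ σ.support := by
    have hu : σ.support = univ := by
      ext y
      simp only [Equiv.Perm.mem_support, Finset.mem_univ, iff_true]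
      exact hfix y
    rw [hu]
    exact Finset.subset_univ _
  refine ⟨ρ, ⟨hcomm, hsub⟩, ?_⟩
  apply e.permCongr.injective
  rw [Stmt6Aux.permCongr_mul, Stmt6Aux.permCongr_mul, Stmt6Aux.permCongr_inv, hρF, hπF, hπ'F, hkey,
    mul_assoc, mul_inv_cancel, mul_one]
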